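/- For any direction c ∈ Fin d, layer α ∈ Fin r and node j ∈ Fin N, the function t ↦ ε_Σ(Q with the single entry Q(c)(α)(j) replaced by Q(c)(α)(j) + t) has derivative at t = 0 equal to (1/N^d) ∑_{i : i(c) = j} R(Q)(i) · ∏_{s ≠ c} Q(s)(α)(i(s)). -/

import Mathlib

open Finset

/-- Canonical-decomposition approximation:
`F(Q)(i) = ∑ α, ∏ s, Q s α (i s)`. -/
noncomputable def capF (d N r : ℕ) (Q : Fin d → Fin r → Fin N → ℝ)
    (i : Fin d → Fin N) : ℝ :=
  ∑ α : Fin r, ∏ s : Fin d, Q s α (i s)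

/-- Residual `R(Q)(i) = F(Q)(i) - T(i)`. -/
noncomputable def resid (d N r : ℕ) (T : (Fin d → Fin N) → ℝ)
    (Q : Fin d → Fin r → Fin N → ℝ) (i : Fin d → Fin N) : ℝ :=
  capF d N r Q i - T i

/-- Global discrepancy `ε_Σ(Q) = (1/(2 N^d)) ∑ i, R(Q)(i)^2`. -/
noncomputable def epsGlobal (d N r : ℕ) (T : (Fin d → Fin N) → ℝ)
    (Q : Fin d → Fin r → Fin N → ℝ) : ℝ :=
  (1 / (2 * (N : ℝ) ^ d)) * ∑ i : Fin d → Fin N, (resid d N r T Q i) ^ 2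

/-- Local discrepancy on the hyperplane `i c = j`:
`ε_{c,j}(Q) = (1/(2 N^(d-1))) ∑_{i : i c = j} R(Q)(i)^2`. -/
noncomputable def epsLocal (d N r : ℕ) (T : (Fin d → Fin N) → ℝ)
    (Q : Fin d → Fin r → Fin N → ℝ) (c : Fin d) (j : Fin N) : ℝ :=
  (1 / (2 * (N : ℝ) ^ (d - 1))) *
    ∑ i ∈ Finset.univ.filter (fun i : Fin d → Fin N => i c = j),
      (resid d N r T Q i) ^ 2

/-- `Q[c,j := v]`: replace the core vector of direction `c` at node `j` by `v`. -/
def updVec (d N r : ℕ) (Q : Fin d → Fin r → Fin N → ℝ) (c : Fin d) (j : Fin N)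
    (v : Fin r → ℝ) : Fin d → Fin r → Fin N → ℝ :=
  fun s α k => if s = c ∧ k = j then v α else Q s α k

/-- `Q` with the single entry `Q c α j` replaced by `Q c α j + t`. -/
def updOne (d N r : ℕ) (Q : Fin d → Fin r → Fin N → ℝ) (c : Fin d) (α : Fin r)
    (j : Fin N) (t : ℝ) : Fin d → Fin r → Fin N → ℝ :=
  fun s β k => if s = c ∧ β = α ∧ k = j then Q c α j + t else Q s β k

lemma resid_updOne (d N r : ℕ) (T : (Fin d → Fin N) → ℝ)
    (Q : Fin d → Fin r → Fin N → ℝ) (c : Fin d) (α : Fin r) (j : Fin N)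
    (t : ℝ) (i : Fin d → Fin N) :
    resid d N r T (updOne d N r Q c α j t) i =
      resid d N r T Q i +
        t * (if i c = j then ∏ s ∈ Finset.univ.erase c, Q s α (i s) else 0) := by
  unfold resid capF
  have hprod : ∀ β : Fin r,
      (∏ s : Fin d, updOne d N r Q c α j t s β (i s)) =
        (∏ s : Fin d, Q s β (i s)) +
          (if β = α ∧ i c = j then
            t * ∏ s ∈ Finset.univ.erase c, Q s α (i s) else 0) := by
    intro β
    have herase : ∀ s ∈ Finset.univ.erase c,
        updOne d N r Q c α j t s β (i s) = Q s β (i s) := by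
      intro s hs
      have : s ≠ c := (Finset.mem_erase.mp hs).1
      simp [updOne, this]
    by_cases hβ : β = α
    · by_cases hij : i c = j
      · subst hβ
        -- now α is replaced by β
        rw [← Finset.mul_prod_erase Finset.univ _ (Finset.mem_univ c),
            ← Finset.mul_prod_erase Finset.univ (fun s => Q s β (i s))
              (Finset.mem_univ c),
            Finset.prod_congr rfl herase]
        simp [updOne, hij]
        ring
      · have : ∀ s ∈ Finset.univ, updOne d N r Q c α j t s β (i s) = Q s β (i s) := by
          intro s _
          by_cases hs : s = c
          · subst hs; simp [updOne, hij]
          · simp [updOne, hs]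
        rw [Finset.prod_congr rfl this]
        simp [hij]
    · have : ∀ s ∈ Finset.univ, updOne d N r Q c α j t s β (i s) = Q s β (i s) := by
        intro s _; simp [updOne, hβ]
      rw [Finset.prod_congr rfl this]
      simp [hβ]
  rw [Finset.sum_congr rfl (fun β _ => hprod β), Finset.sum_add_distrib]
  by_cases hij : i c = j
  · simp only [hij, and_true]
    rw [Finset.sum_ite_eq' Finset.univ α]
    simp
    ring
  · simp [hij]

theorem deriv_global_discrepancy (d N r : ℕ) (hd : 0 < d) (hN : 0 < N)
    (hr : 0 < r) (T : (Fin d → Fin N) → ℝ) (Q : Fin d → Fin r → Fin N → ℝ)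
    (c : Fin d) (α : Fin r) (j : Fin N) :
    HasDerivAt (fun t : ℝ => epsGlobal d N r T (updOne d N r Q c α j t))
      ((1 / (N : ℝ) ^ d) *
        ∑ i ∈ Finset.univ.filter (fun i : Fin d → Fin N => i c = j),
          resid d N r T Q i * ∏ s ∈ Finset.univ.erase c, Q s α (i s)) 0 := by
  set a : (Fin d → Fin N) → ℝ := fun i => resid d N r T Q i with ha
  set b : (Fin d → Fin N) → ℝ := fun i =>
    if i c = j then ∏ s ∈ Finset.univ.erase c, Q s α (i s) else 0 with hb
  have hfun : (fun t : ℝ => epsGlobal d N r T (updOne d N r Q c α j t)) =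
      fun t : ℝ => (1 / (2 * (N : ℝ) ^ d)) *
        ∑ i : Fin d → Fin N, (a i + t * b i) ^ 2 := by
    funext t
    unfold epsGlobal
    congr 1
    exact Finset.sum_congr rfl fun i _ => by
      rw [resid_updOne d N r T Q c α j t i]
  rw [hfun]
  have hterm : ∀ i : Fin d → Fin N,
      HasDerivAt (fun t : ℝ => (a i + t * b i) ^ 2) (2 * a i * b i) 0 := by
    intro i
    have h1 : HasDerivAt (fun t : ℝ => a i + t * b i) (b i) 0 := by
      simpa using ((hasDerivAt_id (0:ℝ)).mul_const (b i)).const_add (a i)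
    have := h1.fun_pow 2
    simpa using this
  have hsum : HasDerivAt (fun t : ℝ => ∑ i : Fin d → Fin N, (a i + t * b i) ^ 2)
      (∑ i : Fin d → Fin N, 2 * a i * b i) 0 :=
    HasDerivAt.fun_sum fun i _ => hterm i
  have := hsum.const_mul (1 / (2 * (N : ℝ) ^ d))
  convert this using 1
  · rfl
  · rfl
  have hNd : (N : ℝ) ^ d ≠ 0 := by positivity
  rw [← Finset.sum_filter_add_sum_filter_not Finset.univ
      (fun i : Fin d → Fin N => i c = j) (fun i => 2 * a i * b i)]
  have h2 : ∑ i ∈ Finset.univ.filter (fun i : Fin d → Fin N => ¬ i c = j),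
      2 * a i * b i = 0 := by
    apply Finset.sum_eq_zero
    intro i hi
    have := (Finset.mem_filter.mp hi).2
    simp [hb, this]
  rw [h2, add_zero]
  have h3 : ∑ i ∈ Finset.univ.filter (fun i : Fin d → Fin N => i c = j),
      2 * a i * b i = 2 * ∑ i ∈ Finset.univ.filter (fun i : Fin d → Fin N => i c = j),
        a i * ∏ s ∈ Finset.univ.erase c, Q s α (i s) := by
    rw [Finset.mul_sum]
    apply Finset.sum_congr rfl
    intro i hi
    have := (Finset.mem_filter.mp hi).2
    simp [hb, this]
    ring
  rw [h3]
  field_simp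
  ring
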